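/- If (ρ, x) is a parimutuel equilibrium with equal wealth for risk-neutral agents with beliefs p_1,…,p_n, then each agent's expenditure satisfies Σ_s ρ_s x_{i,s} = 1/n, and setting ρ_{i,s} = n·ρ_s·x_{i,s} defines a probability distribution ρ_i ∈ Δ(S) for each agent with (1/n)Σ_i ρ_i = ρ. -/
import Mathlib


/-- in an equal-wealth parimutuel equilibrium `(q, x)` with
full-support risk-neutral beliefs, each agent spends exactly `1/n`, the
state-contingent pool shares `ρ i s = n · q s · x i s` form a probability
distribution for each agent, and these reports average back to the price. -/
theorem stmt9 {S : Type*} [Fintype S] [Nonempty S] {n : ℕ} (hn : 0 < n)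
    (p : Fin n → S → ℝ) (hp : ∀ i, p i ∈ stdSimplex ℝ S) (hfs : ∀ i s, 0 < p i s)
    (q : S → ℝ) (hq : q ∈ stdSimplex ℝ S)
    (x : Fin n → S → ℝ) (hx : ∀ i s, 0 ≤ x i s)
    (hclear : ∀ s, ∑ i, x i s = 1)
    (hopt : ∀ i, ∀ y : S → ℝ, (∀ s, 0 ≤ y s) → ∑ s, q s * y s ≤ 1 / n →
      ∑ s, p i s * y s ≤ ∑ s, p i s * x i s) :
    (∀ i, ∑ s, q s * x i s = 1 / n) ∧
    (∀ i, (fun s => n * (q s * x i s)) ∈ stdSimplex ℝ S) ∧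
    (∀ s, (∑ i, n * (q s * x i s)) / n = q s) := by
  classical
  obtain ⟨hq0, hq1⟩ := hq
  have hnR : (0:ℝ) < n := by exact_mod_cast hn
  have hninv : (0:ℝ) ≤ 1 / n := by positivity
  -- prices are strictly positive
  have hqpos : ∀ s, 0 < q s := by
    intro s
    rcases (hq0 s).lt_or_eq with h | h
    · exact h
    exfalso
    set i : Fin n := ⟨0, hn⟩
    have hpxnn : (0:ℝ) ≤ ∑ t, p i t * x i t :=
      Finset.sum_nonneg fun t _ => mul_nonneg (hfs i t).le (hx i t)
    set T : ℝ := (∑ t, p i t * x i t + 1) / p i s with hT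
    have hT0 : 0 ≤ T := div_nonneg (by linarith) (hfs i s).le
    set y : S → ℝ := fun t => if t = s then T else 0 with hy
    have hynn : ∀ t, 0 ≤ y t := by
      intro t; simp only [hy]; split <;> simp [hT0]
    have hcost : ∑ t, q t * y t ≤ 1 / n := by
      have : ∑ t, q t * y t = q s * T := by
        simp only [hy, mul_ite, mul_zero]
        exact Finset.sum_ite_eq' _ _ _ |>.trans (by simp)
      rw [this, ← h, zero_mul]; exact hninv
    have hutil : ∑ t, p i t * y t = ∑ t, p i t * x i t + 1 := by
      have : ∑ t, p i t * y t = p i s * T := by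
        simp only [hy, mul_ite, mul_zero]
        exact Finset.sum_ite_eq' _ _ _ |>.trans (by simp)
      rw [this, hT, mul_div_cancel₀ _ (hfs i s).ne']
    have := hopt i y hynn hcost
    rw [hutil] at this
    linarith
  -- each agent spends at least 1/n
  have hge : ∀ i, 1 / n ≤ ∑ s, q s * x i s := by
    intro i
    by_contra h'
    push_neg at h'
    obtain s0 := Classical.arbitrary S
    set ε : ℝ := 1 / n - ∑ s, q s * x i s with hε
    have hε0 : 0 < ε := by simp only [hε]; linarith
    set y : S → ℝ := fun t => x i t + if t = s0 then ε / q s0 else 0 with hy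
    have hynn : ∀ t, 0 ≤ y t := by
      intro t; simp only [hy]
      have : (0:ℝ) ≤ if t = s0 then ε / q s0 else 0 := by
        split
        · exact (div_nonneg hε0.le (hqpos s0).le)
        · exact le_refl 0
      linarith [hx i t]
    have hsplit : ∀ (f : S → ℝ),
        ∑ t, f t * y t = ∑ t, f t * x i t + f s0 * (ε / q s0) := by
      intro f
      simp only [hy, mul_add, Finset.sum_add_distrib, mul_ite, mul_zero]
      rw [Finset.sum_ite_eq' _ _ _]
      simp
    have hcost : ∑ t, q t * y t ≤ 1 / n := by
      rw [hsplit q, mul_div_cancel₀ _ (hqpos s0).ne']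
      simp only [hε]; linarith
    have := hopt i y hynn hcost
    rw [hsplit (p i)] at this
    have : p i s0 * (ε / q s0) ≤ 0 := by linarith
    have hpos : 0 < p i s0 * (ε / q s0) :=
      mul_pos (hfs i s0) (div_pos hε0 (hqpos s0))
    linarith
  -- total spending is 1
  have hsum : ∑ i, ∑ s, q s * x i s = 1 := by
    rw [Finset.sum_comm]
    calc ∑ s, ∑ i, q s * x i s = ∑ s, q s * ∑ i, x i s := by
          simp [Finset.mul_sum]
      _ = ∑ s, q s := by simp [hclear]
      _ = 1 := hq1
  -- hence each spends exactly 1/n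
  have hspend : ∀ i, ∑ s, q s * x i s = 1 / n := by
    have key : ∀ i ∈ Finset.univ, (∑ s, q s * x i s) - 1 / n = 0 := by
      apply (Finset.sum_eq_zero_iff_of_nonneg
        (fun i _ => sub_nonneg.2 (hge i))).1
      rw [Finset.sum_sub_distrib, hsum, Finset.sum_const, Finset.card_univ,
        Fintype.card_fin, nsmul_eq_mul, mul_one_div, div_self hnR.ne']
      ring
    intro i
    have := key i (Finset.mem_univ i)
    linarith
  refine ⟨hspend, ?_, ?_⟩
  · intro i
    constructor
    · intro s
      exact mul_nonneg hnR.le (mul_nonneg (hq0 s) (hx i s))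
    · rw [← Finset.mul_sum, hspend i]
      field_simp
  · intro s
    rw [← Finset.mul_sum, ← Finset.mul_sum, hclear s, mul_one]
    field_simp
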